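/- arXiv:1801.04896 — 10 statements merged into one kernel-verified Lean document; each statement's English description precedes it below -/
import Mathlib

section
/- Let α ∈ ℝ³ with α ≠ 0, let k ∈ ℝ, and let f, g ∈ ℝ³ be arbitrary. Then the triple (α, kα, f⊗α + α⊗g) belongs to the wave cone Λ, i.e., there exists (ξ, c) ∈ (ℝ³ \ {0}) × ℝ with (f⊗α + α⊗g)ξ + cα = 0, (f⊗α + α⊗g)ᵀξ + ckα = 0 and α·ξ = 0. -/
open Matrix

private lemma key2 (α ξ f g : Fin 3 → ℝ) (k : ℝ) (h1 : α ⬝ᵥ ξ = 0)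
    (h2 : f ⬝ᵥ ξ = k * (g ⬝ᵥ ξ)) :
    (vecMulVec f α + vecMulVec α g) *ᵥ ξ + (-(g ⬝ᵥ ξ)) • α = 0 ∧
    (vecMulVec f α + vecMulVec α g)ᵀ *ᵥ ξ + (-(g ⬝ᵥ ξ)) • (k • α) = 0 := by
  simp only [dotProduct, Fin.sum_univ_three] at h1 h2
  constructor <;> funext i <;>
    simp only [mulVec, vecMulVec, transpose_apply, Pi.add_apply, Pi.smul_apply,
      Matrix.add_apply, of_apply, dotProduct, Fin.sum_univ_three, smul_eq_mul,
      Pi.zero_apply, neg_mul]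
  · linear_combination (f i) * h1
  · linear_combination (α i) * h2 + (g i) * h1

/-- For `α ≠ 0`, `k ∈ ℝ` and arbitrary `f, g`, the triple `(α, kα, f⊗α + α⊗g)`
lies in the 3D MHD wave cone. -/
theorem stmt2 (α : Fin 3 → ℝ) (hα : α ≠ 0) (k : ℝ) (f g : Fin 3 → ℝ) :
    ∃ ξ : Fin 3 → ℝ, ξ ≠ 0 ∧ ∃ c : ℝ,
      (vecMulVec f α + vecMulVec α g) *ᵥ ξ + c • α = 0 ∧
      (vecMulVec f α + vecMulVec α g)ᵀ *ᵥ ξ + c • (k • α) = 0 ∧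
      α ⬝ᵥ ξ = 0 := by
  set w : Fin 3 → ℝ := f - k • g with hw
  -- it suffices to find ξ ≠ 0 orthogonal to α and w
  suffices h : ∃ ξ : Fin 3 → ℝ, ξ ≠ 0 ∧ α ⬝ᵥ ξ = 0 ∧ w ⬝ᵥ ξ = 0 by
    obtain ⟨ξ, hξ, h1, h2⟩ := h
    have h2' : f ⬝ᵥ ξ = k * (g ⬝ᵥ ξ) := by
      have := h2
      simp only [hw, dotProduct, Fin.sum_univ_three, Pi.sub_apply, Pi.smul_apply,
        smul_eq_mul] at this ⊢
      linarith
    obtain ⟨e1, e2⟩ := key2 α ξ f g k h1 h2'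
    exact ⟨ξ, hξ, -(g ⬝ᵥ ξ), e1, e2, h1⟩
  by_cases hc : α 1 * w 2 - α 2 * w 1 = 0 ∧ α 2 * w 0 - α 0 * w 2 = 0 ∧
      α 0 * w 1 - α 1 * w 0 = 0
  · obtain ⟨c1, c2, c3⟩ := hc
    by_cases h01 : α 0 = 0 ∧ α 1 = 0
    · -- then α 2 ≠ 0
      have h2 : α 2 ≠ 0 := by
        intro h2
        apply hα; funext i; fin_cases i <;> simp [h01.1, h01.2, h2]
      refine ⟨![0, α 2, -(α 1)], ?_, ?_, ?_⟩
      · intro h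
        apply h2
        have := congrFun h 1
        simpa using this
      · simp [dotProduct, Fin.sum_univ_three]; ring
      · simp only [dotProduct, Fin.sum_univ_three]
        simp only [Matrix.cons_val_zero, Matrix.cons_val_one, Matrix.head_cons,
          Matrix.cons_val_two, Matrix.tail_cons]
        linarith [c1]
    · -- α 0 ≠ 0 or α 1 ≠ 0
      refine ⟨![α 1, -(α 0), 0], ?_, ?_, ?_⟩
      · intro h
        apply h01
        constructor
        · have := congrFun h 1; simpa using this
        · have := congrFun h 0; simpa using this
      · simp [dotProduct, Fin.sum_univ_three]; ring
      · simp only [dotProduct, Fin.sum_univ_three]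
        simp only [Matrix.cons_val_zero, Matrix.cons_val_one, Matrix.head_cons,
          Matrix.cons_val_two, Matrix.tail_cons]
        linarith [c3]
  · -- the cross product α × w is nonzero
    refine ⟨![α 1 * w 2 - α 2 * w 1, α 2 * w 0 - α 0 * w 2, α 0 * w 1 - α 1 * w 0],
      ?_, ?_, ?_⟩
    · intro h
      apply hc
      refine ⟨?_, ?_, ?_⟩
      · have := congrFun h 0; simpa using this
      · have := congrFun h 1; simpa using this
      · have := congrFun h 2; simpa using this
    · simp [dotProduct, Fin.sum_univ_three]; ring
    · simp [dotProduct, Fin.sum_univ_three]; ring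
end

section
/- For M ∈ ℝ^{3×3}, the triple (0, 0, M) belongs to the wave cone Λ if and only if there exist orthonormal vectors f₁, f₂ ∈ ℝ³ and coefficients c₁₁, c₁₂, c₂₁, c₂₂ ∈ ℝ such that M = c₁₁ f₁⊗f₁ + c₁₂ f₁⊗f₂ + c₂₁ f₂⊗f₁ + c₂₂ f₂⊗f₂. -/
open Matrix RealInnerProductSpace

lemma vmv_mulVec (f g ξ : Fin 3 → ℝ) : vecMulVec f g *ᵥ ξ = (g ⬝ᵥ ξ) • f := by
  ext k
  simp only [vecMulVec_apply, mulVec, dotProduct, Finset.mul_sum,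
    Pi.smul_apply, smul_eq_mul, Finset.sum_mul]
  exact Finset.sum_congr rfl fun i _ => by ring

lemma vmv_transpose (f g : Fin 3 → ℝ) : (vecMulVec f g)ᵀ = vecMulVec g f := by
  ext i j; simp [vecMulVec_apply, mul_comm]

lemma conj_entry (B M : Matrix (Fin 3) (Fin 3) ℝ) (i j : Fin 3) :
    (Bᵀ * M * B) i j = (fun k => B k i) ⬝ᵥ (M *ᵥ fun k => B k j) := by
  simp only [mul_apply, transpose_apply, dotProduct, mulVec, Finset.sum_mul,
    Finset.mul_sum]
  rw [Finset.sum_comm]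
  exact Finset.sum_congr rfl fun k _ => Finset.sum_congr rfl fun l _ => by ring

lemma expand_BCBt (B C : Matrix (Fin 3) (Fin 3) ℝ) :
    B * C * Bᵀ = ∑ i : Fin 3, ∑ j : Fin 3,
      C i j • vecMulVec (fun k => B k i) (fun k => B k j) := by
  ext k l
  simp only [mul_apply, transpose_apply, Finset.sum_apply, Matrix.sum_apply,
    Matrix.smul_apply, vecMulVec_apply, smul_eq_mul, Finset.sum_mul, Finset.mul_sum]
  rw [Finset.sum_comm]
  exact Finset.sum_congr rfl fun i _ => Finset.sum_congr rfl fun j _ => by ring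

/-- `(0,0,M)` lies in the 3D wave cone iff `M` is a combination of tensor
products of two orthonormal vectors. -/
theorem stmt4 (M : Matrix (Fin 3) (Fin 3) ℝ) :
    (∃ ξ : Fin 3 → ℝ, ξ ≠ 0 ∧ M *ᵥ ξ = 0 ∧ Mᵀ *ᵥ ξ = 0) ↔
    ∃ f₁ f₂ : Fin 3 → ℝ, f₁ ⬝ᵥ f₁ = 1 ∧ f₂ ⬝ᵥ f₂ = 1 ∧ f₁ ⬝ᵥ f₂ = 0 ∧
      ∃ c₁₁ c₁₂ c₂₁ c₂₂ : ℝ,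
        M = c₁₁ • vecMulVec f₁ f₁ + c₁₂ • vecMulVec f₁ f₂
          + c₂₁ • vecMulVec f₂ f₁ + c₂₂ • vecMulVec f₂ f₂ := by
  constructor
  · rintro ⟨ξ, hξ, hMξ, hMtξ⟩
    -- normalize ξ
    have hξξ : ξ ⬝ᵥ ξ > 0 := by
      have hnn : (0:ℝ) ≤ ξ ⬝ᵥ ξ := Finset.sum_nonneg fun i _ => mul_self_nonneg (ξ i)
      rcases lt_or_eq_of_le hnn with h | h
      · exact h
      · exact absurd ((dotProduct_self_eq_zero).mp h.symm) hξ
    set c : ℝ := (Real.sqrt (ξ ⬝ᵥ ξ))⁻¹ with hc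
    set e : Fin 3 → ℝ := c • ξ with he
    have hee : e ⬝ᵥ e = 1 := by
      have h1 : e ⬝ᵥ e = c * c * (ξ ⬝ᵥ ξ) := by
        simp only [he, smul_dotProduct, dotProduct_smul, smul_eq_mul]; ring
      rw [h1, hc, ← mul_inv, Real.mul_self_sqrt hξξ.le, inv_mul_cancel₀ hξξ.ne']
    have hMe : M *ᵥ e = 0 := by rw [he, mulVec_smul, hMξ, smul_zero]
    have hMte : Mᵀ *ᵥ e = 0 := by rw [he, mulVec_smul, hMtξ, smul_zero]
    -- extend e to an orthonormal basis
    have hcard : Module.finrank ℝ (EuclideanSpace ℝ (Fin 3)) = Fintype.card (Fin 3) := by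
      simp [finrank_euclideanSpace]
    have hinner : ∀ x y : EuclideanSpace ℝ (Fin 3),
        @inner ℝ (EuclideanSpace ℝ (Fin 3)) _ x y = (x : Fin 3 → ℝ) ⬝ᵥ (y : Fin 3 → ℝ) := by
      intro x y
      simp [PiLp.inner_apply, dotProduct, mul_comm]
    have hv : Orthonormal (E := EuclideanSpace ℝ (Fin 3)) ℝ (({0} : Set (Fin 3)).restrict
        (fun _ => WithLp.toLp 2 e)) := by
      constructor
      · intro i
        have h2 : ‖(WithLp.toLp 2 e : EuclideanSpace ℝ (Fin 3))‖ ^ 2 = 1 := by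
          rw [← real_inner_self_eq_norm_sq, hinner]; exact hee
        have := norm_nonneg (WithLp.toLp 2 e : EuclideanSpace ℝ (Fin 3))
        show ‖(WithLp.toLp 2 e : EuclideanSpace ℝ (Fin 3))‖ = 1
        nlinarith
      · intro i j hij
        exfalso
        apply hij
        ext
        have hi := i.2; have hj := j.2
        simp only [Set.mem_singleton_iff] at hi hj
        rw [hi, hj]
    obtain ⟨b, hb⟩ := hv.exists_orthonormalBasis_extension_of_card_eq hcard
    have hb0 : (b 0 : Fin 3 → ℝ) = e := by rw [hb 0 rfl]
    have hbON : ∀ i j : Fin 3,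
        ((b i : Fin 3 → ℝ) ⬝ᵥ (b j : Fin 3 → ℝ)) = if i = j then 1 else 0 := by
      intro i j
      rw [← hinner]
      rw [orthonormal_iff_ite.mp b.orthonormal]
    -- the orthogonal matrix B
    set B : Matrix (Fin 3) (Fin 3) ℝ := Matrix.of (fun k i => (b i : Fin 3 → ℝ) k) with hB
    have hBcol : ∀ i : Fin 3, (fun k => B k i) = (b i : Fin 3 → ℝ) := fun i => rfl
    have hBtB : Bᵀ * B = 1 := by
      ext i j
      simp only [mul_apply, transpose_apply, one_apply, hB, Matrix.of_apply]
      rw [← hbON i j]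
      rfl
    have hBBt : B * Bᵀ = 1 := mul_eq_one_comm.mp hBtB
    set C : Matrix (Fin 3) (Fin 3) ℝ := Bᵀ * M * B with hC
    have hMC : M = B * C * Bᵀ := by
      rw [hC]
      rw [show B * (Bᵀ * M * B) * Bᵀ = (B * Bᵀ) * M * (B * Bᵀ) by
        simp only [Matrix.mul_assoc]]
      rw [hBBt, Matrix.one_mul, Matrix.mul_one]
    have hCj0 : ∀ i, C i 0 = 0 := by
      intro i
      rw [hC, conj_entry, hBcol 0, hb0, hMe, dotProduct_zero]
    have hC0j : ∀ j, C 0 j = 0 := by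
      intro j
      rw [hC, conj_entry, hBcol 0, hb0, dotProduct_mulVec,
        show (e ᵥ* M) = Mᵀ *ᵥ e from (mulVec_transpose M e).symm, hMte, zero_dotProduct]
    refine ⟨(b 1 : Fin 3 → ℝ), (b 2 : Fin 3 → ℝ), by simpa using hbON 1 1,
      by simpa using hbON 2 2, by simpa using hbON 1 2,
      C 1 1, C 1 2, C 2 1, C 2 2, ?_⟩
    rw [hMC, expand_BCBt]
    simp only [hBcol]
    rw [Fin.sum_univ_three]
    simp only [Fin.sum_univ_three, hCj0, hC0j, zero_smul, zero_add, add_zero]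
    abel
  · rintro ⟨f₁, f₂, h1, h2, h12, c₁₁, c₁₂, c₂₁, c₂₂, hM⟩
    refine ⟨crossProduct f₁ f₂, ?_, ?_, ?_⟩
    · intro h
      have hcc := cross_dot_cross f₁ f₂ f₁ f₂
      rw [show (crossProduct f₁) f₂ = 0 from h] at hcc
      simp [h1, h2, h12] at hcc
    · rw [hM]
      simp only [Matrix.add_mulVec, Matrix.smul_mulVec, vmv_mulVec,
        dot_self_cross, dot_cross_self, zero_smul, smul_zero, add_zero]
    · rw [hM]
      simp only [Matrix.transpose_add, Matrix.transpose_smul, vmv_transpose,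
        Matrix.add_mulVec, Matrix.smul_mulVec, vmv_mulVec,
        dot_self_cross, dot_cross_self, zero_smul, smul_zero, add_zero]
end

section
/- In two dimensions, let α ∈ ℝ² \ {0} and k ∈ ℝ. Then (α, kα, M) belongs to the wave cone Λ if and only if M = c₁₁ α⊗α + c₁₂ [α⊗α^⊥ + k α^⊥⊗α] for some c₁₁, c₁₂ ∈ ℝ, where α^⊥ = (−α₂, α₁). -/
open Matrix

/-- 2D wave cone characterization for triples `(α, kα, M)` with `α ≠ 0`. -/
theorem stmt6 (α : Fin 2 → ℝ) (hα : α ≠ 0) (k : ℝ) (M : Matrix (Fin 2) (Fin 2) ℝ) :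
    (∃ ξ : Fin 2 → ℝ, ξ ≠ 0 ∧ ∃ c : ℝ,
      M *ᵥ ξ + c • α = 0 ∧ Mᵀ *ᵥ ξ + c • (k • α) = 0 ∧
      α ⬝ᵥ ξ = 0 ∧ (k • α) ⬝ᵥ ξ = 0) ↔
    ∃ c₁₁ c₁₂ : ℝ, M = c₁₁ • vecMulVec α α
      + c₁₂ • (vecMulVec α ![-(α 1), α 0] + k • vecMulVec ![-(α 1), α 0] α) := by
  set a : ℝ := α 0 with ha
  set b : ℝ := α 1 with hb
  have hab : a ≠ 0 ∨ b ≠ 0 := by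
    by_contra h
    push_neg at h
    apply hα
    funext i
    fin_cases i
    · exact h.1
    · exact h.2
  have hs : a ^ 2 + b ^ 2 ≠ 0 := by
    rcases hab with h | h <;> positivity
  constructor
  · rintro ⟨ξ, hξ0, c, h1, h2, h3, _⟩
    set x : ℝ := ξ 0 with hx
    set y : ℝ := ξ 1 with hy
    have e1 : M 0 0 * x + M 0 1 * y + c * a = 0 := by
      have := congrFun h1 0
      simpa [mulVec, dotProduct, Fin.sum_univ_two] using this
    have e2 : M 1 0 * x + M 1 1 * y + c * b = 0 := by
      have := congrFun h1 1
      simpa [mulVec, dotProduct, Fin.sum_univ_two] using this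
    have e3 : M 0 0 * x + M 1 0 * y + c * (k * a) = 0 := by
      have := congrFun h2 0
      simpa [mulVec, dotProduct, Fin.sum_univ_two, Matrix.transpose_apply] using this
    have e4 : M 0 1 * x + M 1 1 * y + c * (k * b) = 0 := by
      have := congrFun h2 1
      simpa [mulVec, dotProduct, Fin.sum_univ_two, Matrix.transpose_apply] using this
    have e5 : a * x + b * y = 0 := by
      simpa [dotProduct, Fin.sum_univ_two] using h3
    set w : ℝ := a * y - b * x with hwdef
    have hsx : (a ^ 2 + b ^ 2) * x = -b * w := by
      rw [hwdef]; linear_combination a * e5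
    have hsy : (a ^ 2 + b ^ 2) * y = a * w := by
      rw [hwdef]; linear_combination b * e5
    have hw : w ≠ 0 := by
      intro h0
      apply hξ0
      funext i
      fin_cases i
      · show x = 0
        have : (a ^ 2 + b ^ 2) * x = 0 := by rw [hsx, h0]; ring
        exact (mul_eq_zero.mp this).resolve_left hs
      · show y = 0
        have : (a ^ 2 + b ^ 2) * y = 0 := by rw [hsy, h0]; ring
        exact (mul_eq_zero.mp this).resolve_left hs
    have F1 : w * (-(b * M 0 0) + a * M 0 1) = -(c * a * (a ^ 2 + b ^ 2)) := by
      linear_combination (a ^ 2 + b ^ 2) * e1 - M 0 0 * hsx - M 0 1 * hsy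
    have F2 : w * (-(b * M 1 0) + a * M 1 1) = -(c * b * (a ^ 2 + b ^ 2)) := by
      linear_combination (a ^ 2 + b ^ 2) * e2 - M 1 0 * hsx - M 1 1 * hsy
    have F3 : w * (-(b * M 0 0) + a * M 1 0) = -(c * k * a * (a ^ 2 + b ^ 2)) := by
      linear_combination (a ^ 2 + b ^ 2) * e3 - M 0 0 * hsx - M 1 0 * hsy
    have F4 : w * (-(b * M 0 1) + a * M 1 1) = -(c * k * b * (a ^ 2 + b ^ 2)) := by
      linear_combination (a ^ 2 + b ^ 2) * e4 - M 0 1 * hsx - M 1 1 * hsy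
    refine ⟨(a ^ 2 * M 0 0 + a * b * (M 0 1 + M 1 0) + b ^ 2 * M 1 1) / (a ^ 2 + b ^ 2) ^ 2,
      -c / w, ?_⟩
    ext i j
    fin_cases i <;> fin_cases j <;>
      simp [vecMulVec, Matrix.add_apply, Matrix.smul_apply, ← ha, ← hb] <;>
      field_simp
    · linear_combination (-(a ^ 2 * b)) * F1 + (-(a * b ^ 2)) * F2 +
        (-(b * (a ^ 2 + b ^ 2))) * F3
    · linear_combination (a ^ 3) * F1 + (a ^ 2 * b) * F2 + (-(b * (a ^ 2 + b ^ 2))) * F4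
    · linear_combination (-(b * (a ^ 2 + b ^ 2))) * F2 + (a ^ 3) * F3 + (a ^ 2 * b) * F4
    · linear_combination (a * (a ^ 2 + b ^ 2)) * F2 + (a ^ 2 * b) * F3 + (a * b ^ 2) * F4
  · rintro ⟨c₁₁, c₁₂, rfl⟩
    refine ⟨![-b, a], ?_, -c₁₂ * (a ^ 2 + b ^ 2), ?_, ?_, ?_, ?_⟩
    · intro h0
      apply hα
      funext i
      fin_cases i
      · have := congrFun h0 1
        simpa using this
      · have := congrFun h0 0
        have : -b = 0 := by simpa using congrFun h0 0
        simpa using neg_eq_zero.mp this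
    · funext i
      fin_cases i <;>
        simp [mulVec, dotProduct, Fin.sum_univ_two, vecMulVec, Matrix.add_apply,
          Matrix.smul_apply, Matrix.vecHead, Matrix.vecTail, Pi.smul_apply, smul_eq_mul,
          ← ha, ← hb] <;> ring
    · funext i
      fin_cases i <;>
        simp [mulVec, dotProduct, Fin.sum_univ_two, vecMulVec, Matrix.add_apply,
          Matrix.smul_apply, Matrix.transpose_apply, Matrix.vecHead, Matrix.vecTail,
          Pi.smul_apply, smul_eq_mul, ← ha, ← hb] <;> ring
    · simp [dotProduct, Fin.sum_univ_two, ← ha, ← hb]; ring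
    · simp [dotProduct, Fin.sum_univ_two, ← ha, ← hb]; ring
end

section
/- Define f : ℝ² × ℝ² × ℝ^{2×2} → ℝ by f(α, β, M) = |(m₁₂ − α₁β₂) − (m₂₁ − α₂β₁)|². Then f is Λ-convex: for every V = (α, β, M) and every W ∈ Λ, the function t ↦ f(V + tW) is convex on ℝ. In fact, t ↦ f(V + tW) is a polynomial of degree at most 2 in t with nonnegative leading coefficient. -/
open Matrix

/-- The 2D state space: `(z⁺, z⁻, M)`. -/
abbrev MHD2State := (Fin 2 → ℝ) × (Fin 2 → ℝ) × Matrix (Fin 2) (Fin 2) ℝ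

/-- The 2D MHD wave cone. -/
def Lambda2 : Set MHD2State :=
  {p | ∃ ξ : Fin 2 → ℝ, ξ ≠ 0 ∧ ∃ c : ℝ,
    p.2.2 *ᵥ ξ + c • p.1 = 0 ∧ p.2.2ᵀ *ᵥ ξ + c • p.2.1 = 0 ∧
    p.1 ⬝ᵥ ξ = 0 ∧ p.2.1 ⬝ᵥ ξ = 0}

/-- The function `f(α,β,M) = |(m₁₂ − α₁β₂) − (m₂₁ − α₂β₁)|²`. -/
noncomputable def fConv (p : MHD2State) : ℝ :=
  |(p.2.2 0 1 - p.1 0 * p.2.1 1) - (p.2.2 1 0 - p.1 1 * p.2.1 0)| ^ 2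

lemma sq_affine_convex (g0 g1 : ℝ) :
    ConvexOn ℝ (Set.univ : Set ℝ) (fun t : ℝ => (g0 + g1 * t) ^ 2) := by
  have h := (Even.convexOn_pow (even_two)).comp_affineMap
    (AffineMap.lineMap g0 (g0 + g1) : ℝ →ᵃ[ℝ] ℝ)
  have hs : (AffineMap.lineMap g0 (g0 + g1) : ℝ →ᵃ[ℝ] ℝ) ⁻¹' Set.univ = Set.univ := by
    simp
  rw [hs] at h
  refine h.congr fun t _ => ?_
  simp [Function.comp, AffineMap.lineMap_apply, smul_eq_mul]
  ring

/-- `fConv` is `Λ`-convex; in fact `t ↦ f(V + tW)` is a quadratic polynomial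
with nonnegative leading coefficient for every `W ∈ Λ`. -/
theorem stmt7 (V W : MHD2State) (hW : W ∈ Lambda2) :
    ConvexOn ℝ (Set.univ : Set ℝ) (fun t : ℝ => fConv (V + t • W)) ∧
    ∃ a b c : ℝ, 0 ≤ a ∧ ∀ t : ℝ, fConv (V + t • W) = a * t ^ 2 + b * t + c := by
  obtain ⟨ξ, hξ, c, -, -, hα, hβ⟩ := hW
  simp only [dotProduct, Fin.sum_univ_two] at hα hβ
  -- the key degeneracy: α and β are parallel
  have hkey : W.1 0 * W.2.1 1 - W.1 1 * W.2.1 0 = 0 := by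
    rcases (Function.ne_iff).1 hξ with ⟨i, hi⟩
    fin_cases i
    · have h0 : (W.1 0 * W.2.1 1 - W.1 1 * W.2.1 0) * ξ 0 = 0 := by
        linear_combination W.2.1 1 * hα - W.1 1 * hβ
      rcases mul_eq_zero.1 h0 with h | h
      · exact h
      · exact absurd h hi
    · have h0 : (W.1 0 * W.2.1 1 - W.1 1 * W.2.1 0) * ξ 1 = 0 := by
        linear_combination (- W.2.1 0) * hα + W.1 0 * hβ
      rcases mul_eq_zero.1 h0 with h | h
      · exact h
      · exact absurd h hi
  set g0 : ℝ := (V.2.2 0 1 - V.1 0 * V.2.1 1) - (V.2.2 1 0 - V.1 1 * V.2.1 0) with hg0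
  set g1 : ℝ := (W.2.2 0 1 - V.1 0 * W.2.1 1 - W.1 0 * V.2.1 1)
    - (W.2.2 1 0 - V.1 1 * W.2.1 0 - W.1 1 * V.2.1 0) with hg1
  have hform : ∀ t : ℝ, fConv (V + t • W) = (g0 + g1 * t) ^ 2 := by
    intro t
    simp only [fConv, Prod.fst_add, Prod.snd_add, Prod.smul_fst, Prod.smul_snd,
      Pi.add_apply, Pi.smul_apply, Matrix.add_apply, Matrix.smul_apply,
      smul_eq_mul, sq_abs, hg0, hg1]
    linear_combination ((-(2*g0 + 2*g1*t)) * t ^ 2 + (W.1 0 * W.2.1 1 - W.1 1 * W.2.1 0) * t ^ 4) * hkey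
  have heq : (fun t : ℝ => fConv (V + t • W)) = fun t : ℝ => (g0 + g1 * t) ^ 2 :=
    funext hform
  constructor
  · rw [heq]; exact sq_affine_convex g0 g1
  · exact ⟨g1 ^ 2, 2 * g0 * g1, g0 ^ 2, sq_nonneg _, fun t => by rw [hform t]; ring⟩
end

section
/- In two dimensions, every element of the Λ-convex hull K^Λ of the constraint set K has the following property: if (α, β, M) ∈ K^Λ and we write M = α⊗β + ΠI + N with Π = (tr(M) − α·β)/2, then the matrix N is symmetric, i.e., m₁₂ − α₁β₂ = m₂₁ − α₂β₁. Consequently K^Λ has empty interior in ℝ² × ℝ² × ℝ^{2×2}. -/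
open Matrix

/-- The 2D MHD constraint set `K`. -/
def K2 : Set MHD2State :=
  {p | ∃ Pi0 : ℝ, p.2.2 = vecMulVec p.1 p.2.1 + Pi0 • (1 : Matrix (Fin 2) (Fin 2) ℝ)}

/-- `Λ`-convexity of a function on the state space. -/
def LambdaConvex2 (f : MHD2State → ℝ) : Prop :=
  ∀ V : MHD2State, ∀ W ∈ Lambda2, ConvexOn ℝ (Set.univ : Set ℝ) fun t : ℝ => f (V + t • W)

/-- The `Λ`-convex hull of `K`. -/
def K2LambdaHull : Set MHD2State :=
  {p | ∀ f : MHD2State → ℝ, LambdaConvex2 f → (∀ q ∈ K2, f q ≤ 0) → f p ≤ 0}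

/-- The defect function `g`. -/
def gDef (p : MHD2State) : ℝ :=
  p.2.2 0 1 - p.1 0 * p.2.1 1 - (p.2.2 1 0 - p.1 1 * p.2.1 0)

lemma sq_affine_convexOn (A B : ℝ) :
    ConvexOn ℝ (Set.univ : Set ℝ) (fun t : ℝ => (A + B * t) ^ 2) := by
  refine ⟨convex_univ, ?_⟩
  intro x _ y _ a b ha hb hab
  simp only [smul_eq_mul]
  have hb' : b = 1 - a := by linarith
  subst hb'
  nlinarith [mul_nonneg ha hb, sq_nonneg (B * x - B * y)]

lemma f_convex : LambdaConvex2 (fun p => (gDef p) ^ 2) := by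
  rintro V W ⟨ξ, hξ, c, _h1, _h2, ha, hb⟩
  -- key: a₀ b₁ = a₁ b₀
  obtain ⟨i, hi⟩ := Function.ne_iff.mp hξ
  simp only [dotProduct, Fin.sum_univ_two] at ha hb
  have key : W.1 0 * W.2.1 1 - W.1 1 * W.2.1 0 = 0 := by
    fin_cases i
    · have h : (W.1 0 * W.2.1 1 - W.1 1 * W.2.1 0) * ξ 0 = 0 := by
        linear_combination W.2.1 1 * ha - W.1 1 * hb
      simpa using mul_eq_zero.mp h |>.resolve_right hi
    · have h : (W.1 0 * W.2.1 1 - W.1 1 * W.2.1 0) * ξ 1 = 0 := by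
        linear_combination (- (W.2.1 0)) * ha + W.1 0 * hb
      simpa using mul_eq_zero.mp h |>.resolve_right hi
  set A : ℝ := gDef V
  set B : ℝ := W.2.2 0 1 - W.2.2 1 0 - (W.1 0 * V.2.1 1 + V.1 0 * W.2.1 1)
      + (W.1 1 * V.2.1 0 + V.1 1 * W.2.1 0)
  have hfun : (fun t : ℝ => (gDef (V + t • W)) ^ 2) = fun t : ℝ => (A + B * t) ^ 2 := by
    funext t
    have hg : gDef (V + t • W) = A + B * t := by
      simp only [gDef, A, B, Prod.fst_add, Prod.snd_add, Prod.smul_fst, Prod.smul_snd,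
        Pi.add_apply, Pi.smul_apply, Matrix.add_apply, Matrix.smul_apply, smul_eq_mul]
      linear_combination (-(t ^ 2)) * key
    rw [hg]
  rw [hfun]
  exact sq_affine_convexOn A B

lemma f_nonpos_on_K : ∀ q ∈ K2, (gDef q) ^ 2 ≤ 0 := by
  rintro q ⟨Pi0, hq⟩
  have : gDef q = 0 := by
    simp only [gDef, hq, vecMulVec_apply, Matrix.add_apply, Matrix.smul_apply,
      Matrix.one_apply, smul_eq_mul]
    norm_num
  simp [this]

lemma hull_sym : ∀ p ∈ K2LambdaHull,
    p.2.2 0 1 - p.1 0 * p.2.1 1 = p.2.2 1 0 - p.1 1 * p.2.1 0 := by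
  intro p hp
  have h := hp (fun q => (gDef q) ^ 2) f_convex f_nonpos_on_K
  have h0 : gDef p = 0 := by
    have := sq_nonneg (gDef p)
    have : (gDef p) ^ 2 = 0 := le_antisymm h (by positivity)
    exact pow_eq_zero_iff (by norm_num) |>.mp this
  simpa [gDef, sub_eq_zero] using h0

/-- Every point of the 2D `Λ`-convex hull satisfies the symmetry constraint
`m₁₂ − α₁β₂ = m₂₁ − α₂β₁`; consequently the hull has empty interior. -/
theorem stmt8 :
    (∀ p ∈ K2LambdaHull,
      p.2.2 0 1 - p.1 0 * p.2.1 1 = p.2.2 1 0 - p.1 1 * p.2.1 0) ∧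
    interior K2LambdaHull = ∅ := by
  refine ⟨hull_sym, ?_⟩
  rw [Set.eq_empty_iff_forall_notMem]
  intro q hq
  set w : MHD2State := (0, 0, Matrix.single 0 1 (1 : ℝ)) with hw
  have hcont : Continuous (fun t : ℝ => q + t • w) :=
    continuous_const.add (continuous_id.smul continuous_const)
  have hmem : (fun t : ℝ => q + t • w) ⁻¹' (interior K2LambdaHull) ∈ nhds (0 : ℝ) := by
    refine (isOpen_interior.preimage hcont).mem_nhds ?_
    simpa using hq
  obtain ⟨ε, hε, hball⟩ := Metric.mem_nhds_iff.mp hmem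
  have ht : (ε / 2) ∈ Metric.ball (0 : ℝ) ε := by
    rw [Metric.mem_ball, Real.dist_eq, sub_zero, abs_of_pos (half_pos hε)]
    linarith
  have h1 : q + (ε / 2) • w ∈ K2LambdaHull := interior_subset (hball ht)
  have h2 : q ∈ K2LambdaHull := interior_subset hq
  have e1 := hull_sym _ h1
  have e2 := hull_sym q h2
  have : (q + (ε / 2) • w).2.2 0 1 = q.2.2 0 1 + ε / 2 := by
    simp [hw, Matrix.add_apply, Matrix.smul_apply, Matrix.single_apply_same]
  have h10 : (q + (ε / 2) • w).2.2 1 0 = q.2.2 1 0 := by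
    simp [hw, Matrix.add_apply, Matrix.smul_apply]
  simp only [hw, Prod.fst_add, Prod.snd_add, Prod.smul_fst, Prod.smul_snd, smul_zero,
    add_zero] at e1 this h10
  rw [this, h10] at e1
  linarith [e1, e2, hε]
end

section
/- Let (u, b, S, a) ∈ ℝ³ × ℝ³ × Sym(3) × ℝ³ and suppose there exists (ξ, c) ∈ (ℝ³ \ {0}) × ℝ such that Sξ + cu = 0, ξ × a + cb = 0, u·ξ = 0 and b·ξ = 0. Then a·b = 0. -/
open Matrix

lemma triple_aux (b ξ a : Fin 3 → ℝ) (i : Fin 3) :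
    (a ⬝ᵥ b) * ξ i = (b ⬝ᵥ ξ) * a i + (crossProduct b (crossProduct ξ a)) i := by
  fin_cases i <;>
    simp [cross_apply, dotProduct, Fin.sum_univ_three] <;> ring

/-- The quantity `a·b` vanishes on the 3D MHD wave cone written in the
variables `(u, b, S, a)`. -/
theorem stmt9 (u b : Fin 3 → ℝ) (S : Matrix (Fin 3) (Fin 3) ℝ) (hS : S.IsSymm)
    (a : Fin 3 → ℝ)
    (h : ∃ ξ : Fin 3 → ℝ, ξ ≠ 0 ∧ ∃ c : ℝ,
      S *ᵥ ξ + c • u = 0 ∧ crossProduct ξ a + c • b = 0 ∧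
      u ⬝ᵥ ξ = 0 ∧ b ⬝ᵥ ξ = 0) :
    a ⬝ᵥ b = 0 := by
  obtain ⟨ξ, hξ, c, -, hcross, -, hbξ⟩ := h
  have hx : crossProduct ξ a = -(c • b) := by
    rw [eq_neg_iff_add_eq_zero]; exact hcross
  have hkey : ∀ i, (a ⬝ᵥ b) * ξ i = 0 := by
    intro i
    have := triple_aux b ξ a i
    rw [hx] at this
    simpa [_root_.map_neg, _root_.map_smul, cross_self, hbξ] using this
  obtain ⟨i, hi⟩ := Function.ne_iff.mp hξ
  have := hkey i
  rcases mul_eq_zero.mp this with h0 | h0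
  · exact h0
  · exact absurd h0 hi
end

section
/- The function Q(u, b, S, a) = a·b on ℝ³ × ℝ³ × Sym(3) × ℝ³ is Λ-affine: for every point V and every wave-cone direction W ∈ Λ, the map t ↦ Q(V + tW) is an affine function of t. Equivalently, since Q is a quadratic form, Q(W) = 0 for every W ∈ Λ. -/
open Matrix

/-- The 3D state space in the variables `(u, b, S, a)`. -/
abbrev MHD3State :=
  (Fin 3 → ℝ) × (Fin 3 → ℝ) × Matrix (Fin 3) (Fin 3) ℝ × (Fin 3 → ℝ)

/-- The 3D MHD wave cone in the variables `(u, b, S, a)` with `S` symmetric. -/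
def Lambda3 : Set MHD3State :=
  {p | p.2.2.1.IsSymm ∧ ∃ ξ : Fin 3 → ℝ, ξ ≠ 0 ∧ ∃ c : ℝ,
    p.2.2.1 *ᵥ ξ + c • p.1 = 0 ∧ crossProduct ξ p.2.2.2 + c • p.2.1 = 0 ∧
    p.1 ⬝ᵥ ξ = 0 ∧ p.2.1 ⬝ᵥ ξ = 0}

/-- The quadratic form `Q(u,b,S,a) = a·b`. -/
def Q3 (p : MHD3State) : ℝ := p.2.2.2 ⬝ᵥ p.2.1

lemma Q3_vanish : ∀ W ∈ Lambda3, Q3 W = 0 := by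
  rintro ⟨u, b, S, a⟩ ⟨-, ξ, hξ, c, -, h2, -, h4⟩
  have e0 := congrFun h2 0
  have e1 := congrFun h2 1
  have e2 := congrFun h2 2
  simp [cross_apply] at e0 e1 e2
  have e3 : b 0 * ξ 0 + b 1 * ξ 1 + b 2 * ξ 2 = 0 := by
    simpa [dotProduct, Fin.sum_univ_three] using h4
  have goal_eq : Q3 (u, b, S, a) = a 0 * b 0 + a 1 * b 1 + a 2 * b 2 := by
    simp [Q3, dotProduct, Fin.sum_univ_three]
  rw [goal_eq]
  rcases eq_or_ne c 0 with hc | hc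
  · subst hc
    obtain ⟨i, hi⟩ := Function.ne_iff.mp hξ
    fin_cases i
    · have h : ξ 0 * (a 0 * b 0 + a 1 * b 1 + a 2 * b 2) = 0 := by
        linear_combination a 0 * e3 + b 1 * e2 - b 2 * e1
      exact (mul_eq_zero.mp h).resolve_left hi
    · have h : ξ 1 * (a 0 * b 0 + a 1 * b 1 + a 2 * b 2) = 0 := by
        linear_combination a 1 * e3 + b 2 * e0 - b 0 * e2
      exact (mul_eq_zero.mp h).resolve_left hi
    · have h : ξ 2 * (a 0 * b 0 + a 1 * b 1 + a 2 * b 2) = 0 := by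
        linear_combination a 2 * e3 + b 0 * e1 - b 1 * e0
      exact (mul_eq_zero.mp h).resolve_left hi
  · have h : c * (a 0 * b 0 + a 1 * b 1 + a 2 * b 2) = 0 := by
      linear_combination a 0 * e0 + a 1 * e1 + a 2 * e2
    exact (mul_eq_zero.mp h).resolve_left hc

/-- `Q(u,b,S,a) = a·b` is `Λ`-affine: along every wave-cone direction `W` the
map `t ↦ Q(V + tW)` is affine; equivalently `Q` vanishes on `Λ`. -/
theorem stmt10 :
    (∀ V : MHD3State, ∀ W ∈ Lambda3,
      ∃ m k : ℝ, ∀ t : ℝ, Q3 (V + t • W) = m * t + k) ∧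
    (∀ W ∈ Lambda3, Q3 W = 0) := by
  refine ⟨fun V W hW => ?_, Q3_vanish⟩
  have hW0 := Q3_vanish W hW
  refine ⟨V.2.2.2 ⬝ᵥ W.2.1 + W.2.2.2 ⬝ᵥ V.2.1, Q3 V, fun t => ?_⟩
  have : Q3 (V + t • W) =
      Q3 V + t * (V.2.2.2 ⬝ᵥ W.2.1 + W.2.2.2 ⬝ᵥ V.2.1) + t * t * Q3 W := by
    simp [Q3, Prod.add_def, Prod.smul_def, dotProduct, Fin.sum_univ_three]
    ring
  rw [this, hW0]
  ring
end

section
/- Every element of the Λ-convex hull K^Λ of the 3D MHD constraint set satisfies a·b = 0. In particular, K^Λ has empty interior in ℝ³ × ℝ³ × Sym(3) × ℝ³. -/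
open Matrix

/-- The 3D MHD constraint set `K`:
`S = u⊗u − b⊗b + ΠI` and `a = b × u`. -/
def K3 : Set MHD3State :=
  {p | (∃ Pi0 : ℝ, p.2.2.1 = vecMulVec p.1 p.1 - vecMulVec p.2.1 p.2.1
          + Pi0 • (1 : Matrix (Fin 3) (Fin 3) ℝ)) ∧
       p.2.2.2 = crossProduct p.2.1 p.1}

/-- `Λ`-convexity of a function on the 3D state space. -/
def LambdaConvex3 (f : MHD3State → ℝ) : Prop :=
  ∀ V : MHD3State, ∀ W ∈ Lambda3, ConvexOn ℝ (Set.univ : Set ℝ) fun t : ℝ => f (V + t • W)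

/-- The `Λ`-convex hull of `K`. -/
def K3LambdaHull : Set MHD3State :=
  {p | ∀ f : MHD3State → ℝ, LambdaConvex3 f → (∀ q ∈ K3, f q ≤ 0) → f p ≤ 0}

/-- On the wave cone, `a ⬝ᵥ b = 0`. -/
lemma wave_ab (W : MHD3State) (hW : W ∈ Lambda3) : W.2.2.2 ⬝ᵥ W.2.1 = 0 := by
  obtain ⟨-, ξ, hξ, c, -, hcross, -, hb⟩ := hW
  set a := W.2.2.2
  set b := W.2.1
  have h0 := congrFun hcross 0
  have h1 := congrFun hcross 1
  have h2 := congrFun hcross 2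
  simp [cross_apply, Pi.add_apply, smul_eq_mul] at h0 h1 h2
  rw [dotProduct, Fin.sum_univ_three] at hb ⊢
  have hpos : 0 < ξ 0 ^ 2 + ξ 1 ^ 2 + ξ 2 ^ 2 := by
    rcases Function.ne_iff.mp hξ with ⟨i, hi⟩
    fin_cases i <;> simp at hi <;> positivity
  have key : (ξ 0 ^ 2 + ξ 1 ^ 2 + ξ 2 ^ 2) * (a 0 * b 0 + a 1 * b 1 + a 2 * b 2) = 0 := by
    linear_combination (b 2 * ξ 1 - b 1 * ξ 2) * h0 + (b 0 * ξ 2 - b 2 * ξ 0) * h1 +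
      (b 1 * ξ 0 - b 0 * ξ 1) * h2 + (a 0 * ξ 0 + a 1 * ξ 1 + a 2 * ξ 2) * hb
  exact (mul_eq_zero.mp key).resolve_left (ne_of_gt hpos)

/-- Affine functions of one real variable are convex. -/
lemma affine_convexOn (α β : ℝ) : ConvexOn ℝ (Set.univ : Set ℝ) (fun t : ℝ => α + β * t) := by
  refine ⟨convex_univ, ?_⟩
  intro x _ y _ s u hs hu hsu
  simp only [smul_eq_mul]
  have : s * (α + β * x) + u * (α + β * y) = α + β * (s * x + u * y) := by
    linear_combination α * hsu
  linarith [this.ge]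

/-- `Q(p) = a ⬝ᵥ b` restricted to a `Λ`-line is affine. -/
lemma q_line (V W : MHD3State) (h0 : W.2.2.2 ⬝ᵥ W.2.1 = 0) (t : ℝ) :
    (V + t • W).2.2.2 ⬝ᵥ (V + t • W).2.1 =
      V.2.2.2 ⬝ᵥ V.2.1 + (V.2.2.2 ⬝ᵥ W.2.1 + W.2.2.2 ⬝ᵥ V.2.1) * t := by
  have : (V + t • W).2.2.2 = V.2.2.2 + t • W.2.2.2 := rfl
  have h2 : (V + t • W).2.1 = V.2.1 + t • W.2.1 := rfl
  rw [this, h2, add_dotProduct, dotProduct_add, dotProduct_add, smul_dotProduct,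
    dotProduct_smul, smul_dotProduct, dotProduct_smul, smul_eq_mul, smul_eq_mul,
    smul_eq_mul, h0]
  simp only [smul_eq_mul]; ring

lemma q_lambdaConvex : LambdaConvex3 (fun p => p.2.2.2 ⬝ᵥ p.2.1) := by
  intro V W hW
  have h0 := wave_ab W hW
  have : (fun t : ℝ => (V + t • W).2.2.2 ⬝ᵥ (V + t • W).2.1) =
      fun t : ℝ => V.2.2.2 ⬝ᵥ V.2.1 + (V.2.2.2 ⬝ᵥ W.2.1 + W.2.2.2 ⬝ᵥ V.2.1) * t := by
    funext t; exact q_line V W h0 t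
  simpa only [this] using affine_convexOn _ _

lemma negq_lambdaConvex : LambdaConvex3 (fun p => -(p.2.2.2 ⬝ᵥ p.2.1)) := by
  intro V W hW
  have h0 := wave_ab W hW
  have : (fun t : ℝ => -((V + t • W).2.2.2 ⬝ᵥ (V + t • W).2.1)) =
      fun t : ℝ => -(V.2.2.2 ⬝ᵥ V.2.1) + (-(V.2.2.2 ⬝ᵥ W.2.1 + W.2.2.2 ⬝ᵥ V.2.1)) * t := by
    funext t; rw [q_line V W h0 t]; ring
  simpa only [this] using affine_convexOn _ _

lemma q_vanishes_K (q : MHD3State) (hq : q ∈ K3) : q.2.2.2 ⬝ᵥ q.2.1 = 0 := by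
  rw [hq.2, dotProduct_comm]
  exact dot_self_cross _ _

lemma hull_ab (p : MHD3State) (hp : p ∈ K3LambdaHull) : p.2.2.2 ⬝ᵥ p.2.1 = 0 := by
  have h1 := hp (fun p => p.2.2.2 ⬝ᵥ p.2.1) q_lambdaConvex
    (fun q hq => (q_vanishes_K q hq).le)
  have h2 := hp (fun p => -(p.2.2.2 ⬝ᵥ p.2.1)) negq_lambdaConvex
    (fun q hq => by simp [q_vanishes_K q hq])
  linarith

/-- Every element of the 3D `Λ`-convex hull satisfies `a·b = 0`; in
particular the hull has empty interior. -/
theorem stmt11 :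
    (∀ p ∈ K3LambdaHull, p.2.2.2 ⬝ᵥ p.2.1 = 0) ∧
    interior K3LambdaHull = ∅ := by
  refine ⟨hull_ab, ?_⟩
  rw [Set.eq_empty_iff_forall_notMem]
  intro x hx
  set e : Fin 3 → ℝ := fun _ => 1 with he
  set w : MHD3State := (0, e, 0, e) with hw
  have hcont : Continuous fun t : ℝ => x + t • w := by fun_prop
  have hopen : IsOpen ((fun t : ℝ => x + t • w) ⁻¹' interior K3LambdaHull) :=
    isOpen_interior.preimage hcont
  have h0mem : (0 : ℝ) ∈ (fun t : ℝ => x + t • w) ⁻¹' interior K3LambdaHull := by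
    simp [hx]
  obtain ⟨δ, hδ, hball⟩ := Metric.isOpen_iff.mp hopen 0 h0mem
  have key : ∀ t : ℝ, |t| < δ → (x + t • w).2.2.2 ⬝ᵥ (x + t • w).2.1 = 0 := by
    intro t ht
    exact hull_ab _ (interior_subset (hball (by simpa [Real.dist_eq] using ht)))
  have hx0 : x.2.2.2 ⬝ᵥ x.2.1 = 0 := hull_ab x (interior_subset hx)
  have qform : ∀ t : ℝ, (x + t • w).2.2.2 ⬝ᵥ (x + t • w).2.1 =
      x.2.2.2 ⬝ᵥ x.2.1 + (x.2.2.2 ⬝ᵥ e + e ⬝ᵥ x.2.1) * t + 3 * t ^ 2 := by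
    intro t
    have h1 : (x + t • w).2.2.2 = x.2.2.2 + t • e := rfl
    have h2 : (x + t • w).2.1 = x.2.1 + t • e := rfl
    rw [h1, h2, add_dotProduct, dotProduct_add, dotProduct_add, smul_dotProduct,
      dotProduct_smul, smul_dotProduct, dotProduct_smul, smul_eq_mul, smul_eq_mul, smul_eq_mul]
    have : e ⬝ᵥ e = 3 := by simp [he, dotProduct, Fin.sum_univ_three]
    rw [this]; simp only [smul_eq_mul]; ring
  set s : ℝ := x.2.2.2 ⬝ᵥ e + e ⬝ᵥ x.2.1 with hs
  have e1 : s * (δ / 2) + 3 * (δ / 2) ^ 2 = 0 := by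
    have := key (δ / 2) (by rw [abs_of_pos (by linarith)]; linarith)
    rw [qform, hx0] at this; linarith
  have e2 : s * (δ / 4) + 3 * (δ / 4) ^ 2 = 0 := by
    have := key (δ / 4) (by rw [abs_of_pos (by linarith)]; linarith)
    rw [qform, hx0] at this; linarith
  nlinarith [mul_pos hδ hδ]
end

section
/- Let α, β, γ, δ ∈ ℝ³ and Π₁, Π₂ ∈ ℝ. Then the difference (α, β, α⊗β + Π₁I) − (γ, δ, γ⊗δ + Π₂I) lies in the wave cone Λ if and only if Π₁ = Π₂ and the four points α, β, γ, δ lie on a common affine hyperplane {x ∈ ℝ³ : x·ξ + c = 0} with ξ ≠ 0. -/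
open Matrix

private lemma vmv_mulVec_s12 (x y ζ : Fin 3 → ℝ) :
    vecMulVec x y *ᵥ ζ = (y ⬝ᵥ ζ) • x := by
  funext i
  simp [mulVec, dotProduct, vecMulVec_apply, Finset.mul_sum, mul_comm, mul_left_comm,
    mul_assoc]

private lemma vmv_transpose_s12 (x y : Fin 3 → ℝ) :
    (vecMulVec x y)ᵀ = vecMulVec y x := by
  ext i j
  simp [vecMulVec_apply, mul_comm]

/-- Any two vectors in ℝ³ have a common nonzero orthogonal vector. -/
private lemma exists_orth (u v : Fin 3 → ℝ) :
    ∃ ξ : Fin 3 → ℝ, ξ ≠ 0 ∧ u ⬝ᵥ ξ = 0 ∧ v ⬝ᵥ ξ = 0 := by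
  classical
  let f : (Fin 3 → ℝ) →ₗ[ℝ] ℝ × ℝ :=
    { toFun := fun x => (u ⬝ᵥ x, v ⬝ᵥ x)
      map_add' := by intro x y; simp [dotProduct_add]
      map_smul' := by intro m x; simp [dotProduct_smul, smul_eq_mul] }
  have hninj : ¬ Function.Injective f := by
    intro hinj
    have := LinearMap.finrank_le_finrank_of_injective hinj
    simp [Module.finrank_pi, Module.finrank_prod] at this
  rw [Function.not_injective_iff] at hninj
  obtain ⟨x, y, hxy, hne⟩ := hninj
  have h0 : f (x - y) = 0 := by rw [map_sub, hxy, sub_self]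
  exact ⟨x - y, sub_ne_zero.mpr hne, congrArg Prod.fst h0, congrArg Prod.snd h0⟩

/-- The difference `(α,β,α⊗β+Π₁I) − (γ,δ,γ⊗δ+Π₂I)` lies in the 3D wave cone
iff `Π₁ = Π₂` and `α, β, γ, δ` lie on a common affine hyperplane. -/
theorem stmt12 (α β γ δ : Fin 3 → ℝ) (Pi1 Pi2 : ℝ) :
    (∃ ξ : Fin 3 → ℝ, ξ ≠ 0 ∧ ∃ c : ℝ,
      (vecMulVec α β + Pi1 • (1 : Matrix (Fin 3) (Fin 3) ℝ)
        - (vecMulVec γ δ + Pi2 • (1 : Matrix (Fin 3) (Fin 3) ℝ))) *ᵥ ξ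
        + c • (α - γ) = 0 ∧
      (vecMulVec α β + Pi1 • (1 : Matrix (Fin 3) (Fin 3) ℝ)
        - (vecMulVec γ δ + Pi2 • (1 : Matrix (Fin 3) (Fin 3) ℝ)))ᵀ *ᵥ ξ
        + c • (β - δ) = 0 ∧
      (α - γ) ⬝ᵥ ξ = 0 ∧ (β - δ) ⬝ᵥ ξ = 0) ↔
    (Pi1 = Pi2 ∧ ∃ ξ : Fin 3 → ℝ, ξ ≠ 0 ∧ ∃ c : ℝ,
      α ⬝ᵥ ξ + c = 0 ∧ β ⬝ᵥ ξ + c = 0 ∧ γ ⬝ᵥ ξ + c = 0 ∧ δ ⬝ᵥ ξ + c = 0) := by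
  constructor
  · rintro ⟨ξ, hξ, c, h1, h2, h3, h4⟩
    have hq : β ⬝ᵥ ξ = δ ⬝ᵥ ξ := by
      have := h4; rw [sub_dotProduct, sub_eq_zero] at this; exact this
    have hp : α ⬝ᵥ ξ = γ ⬝ᵥ ξ := by
      have := h3; rw [sub_dotProduct, sub_eq_zero] at this; exact this
    -- rewrite h1, h2
    simp only [sub_mulVec, add_mulVec, vmv_mulVec_s12, smul_mulVec, one_mulVec,
      transpose_sub, transpose_add, vmv_transpose_s12, transpose_smul, transpose_one] at h1 h2
    -- h1 : (β⬝ξ)•α + Pi1•ξ - ((δ⬝ξ)•γ + Pi2•ξ) + c•(α-γ) = 0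
    have h1' : ((β ⬝ᵥ ξ) + c) • (α - γ) + (Pi1 - Pi2) • ξ = 0 := by
      rw [← hq] at h1
      rw [← h1]; module
    have h2' : ((α ⬝ᵥ ξ) + c) • (β - δ) + (Pi1 - Pi2) • ξ = 0 := by
      rw [← hp] at h2
      rw [← h2]; module
    have hΔ : Pi1 = Pi2 := by
      have hd : (((β ⬝ᵥ ξ) + c) • (α - γ) + (Pi1 - Pi2) • ξ) ⬝ᵥ ξ = 0 := by
        rw [h1']; simp
      rw [add_dotProduct, smul_dotProduct, smul_dotProduct, h3, smul_zero,
        zero_add, smul_eq_mul] at hd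
      have hξξ : ξ ⬝ᵥ ξ ≠ 0 := fun h => hξ (dotProduct_self_eq_zero.mp h)
      have : Pi1 - Pi2 = 0 := by
        rcases mul_eq_zero.mp hd with h | h
        · exact h
        · exact absurd h hξξ
      linarith
    refine ⟨hΔ, ?_⟩
    rw [hΔ, sub_self, zero_smul, add_zero, smul_eq_zero] at h1' h2'
    by_cases hb : (β ⬝ᵥ ξ) + c = 0
    · by_cases ha : (α ⬝ᵥ ξ) + c = 0
      · exact ⟨ξ, hξ, c, ha, hb, by rw [← hp]; exact ha, by rw [← hq]; exact hb⟩
      · -- β = δ; find plane through α, γ, β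
        have hbd : β = δ := by
          rcases h2' with h | h
          · exact absurd h ha
          · exact sub_eq_zero.mp h
        obtain ⟨ζ, hζ, hu, hv⟩ := exists_orth (γ - α) (β - α)
        refine ⟨ζ, hζ, -(α ⬝ᵥ ζ), by ring, ?_, ?_, ?_⟩
        · rw [sub_dotProduct, sub_eq_zero] at hv; rw [hv]; ring
        · rw [sub_dotProduct, sub_eq_zero] at hu; rw [hu]; ring
        · rw [sub_dotProduct, sub_eq_zero] at hv; rw [← hbd, hv]; ring
    · -- α = γ; find plane through α, β, δ
      have hag : α = γ := by
        rcases h1' with h | h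
        · exact absurd h hb
        · exact sub_eq_zero.mp h
      obtain ⟨ζ, hζ, hu, hv⟩ := exists_orth (β - α) (δ - α)
      refine ⟨ζ, hζ, -(α ⬝ᵥ ζ), by ring, ?_, ?_, ?_⟩
      · rw [sub_dotProduct, sub_eq_zero] at hu; rw [hu]; ring
      · rw [← hag]; ring
      · rw [sub_dotProduct, sub_eq_zero] at hv; rw [hv]; ring
  · rintro ⟨hP, ξ, hξ, c, ha, hb, hg, hd⟩
    refine ⟨ξ, hξ, c, ?_, ?_, ?_, ?_⟩
    · simp only [sub_mulVec, add_mulVec, vmv_mulVec_s12, smul_mulVec, one_mulVec]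
      rw [hP]
      have hb' : β ⬝ᵥ ξ = -c := by linarith
      have hd' : δ ⬝ᵥ ξ = -c := by linarith
      rw [hb', hd']
      module
    · simp only [transpose_sub, transpose_add, vmv_transpose_s12, transpose_smul, transpose_one,
        sub_mulVec, add_mulVec, vmv_mulVec_s12, smul_mulVec, one_mulVec]
      rw [hP]
      have ha' : α ⬝ᵥ ξ = -c := by linarith
      have hg' : γ ⬝ᵥ ξ = -c := by linarith
      rw [ha', hg']
      module
    · rw [sub_dotProduct]; linarith
    · rw [sub_dotProduct]; linarith
end

section
/- Let α⁺ = (3,1), α⁻ = (−3,1), β⁺ = (2,1), β⁻ = (−2,1) ∈ ℝ². Then the points V^± = (α^±, β^±, α^±⊗β^±) both lie in the 2D constraint set K (with Π = 0), their difference V⁺ − V⁻ lies in the wave cone Λ, and the midpoint (V⁺ + V⁻)/2 = ((0,1), (0,1), diag(6,1)) does not lie in K. Hence the lamination convex hull K^{lc,Λ} strictly contains K. -/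
open Matrix

/-- The iterated laminates `K^{N,Λ}`. -/
def lamIter : ℕ → Set MHD2State
  | 0 => K2
  | N + 1 => lamIter N ∪
      {p | ∃ l : ℝ, l ∈ Set.Icc (0 : ℝ) 1 ∧ ∃ V ∈ lamIter N, ∃ W ∈ lamIter N,
        V - W ∈ Lambda2 ∧ p = l • V + (1 - l) • W}

/-- The lamination convex hull `K^{lc,Λ}`. -/
def lamHull2 : Set MHD2State := ⋃ N : ℕ, lamIter N

/-- With `α^± = (±3,1)`, `β^± = (±2,1)`: the points `V^± = (α^±, β^±, α^±⊗β^±)`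
lie in `K`, their difference lies in `Λ`, their midpoint is
`((0,1),(0,1),diag(6,1))` which does not lie in `K`; hence the lamination
convex hull strictly contains `K`. -/
theorem stmt13 :
    ((![(3:ℝ),1], ![(2:ℝ),1], vecMulVec ![(3:ℝ),1] ![(2:ℝ),1]) ∈ K2) ∧
    ((![(-3:ℝ),1], ![(-2:ℝ),1], vecMulVec ![(-3:ℝ),1] ![(-2:ℝ),1]) ∈ K2) ∧
    (((![(3:ℝ),1], ![(2:ℝ),1], vecMulVec ![(3:ℝ),1] ![(2:ℝ),1]) :
        MHD2State) - (![(-3:ℝ),1], ![(-2:ℝ),1], vecMulVec ![(-3:ℝ),1] ![(-2:ℝ),1])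
      ∈ Lambda2) ∧
    ((1/2 : ℝ) • ((![(3:ℝ),1], ![(2:ℝ),1], vecMulVec ![(3:ℝ),1] ![(2:ℝ),1]) : MHD2State)
      + (1/2 : ℝ) • ((![(-3:ℝ),1], ![(-2:ℝ),1], vecMulVec ![(-3:ℝ),1] ![(-2:ℝ),1]) : MHD2State)
      = (![(0:ℝ),1], ![(0:ℝ),1], !![(6:ℝ),0;0,1])) ∧
    ((![(0:ℝ),1], ![(0:ℝ),1], (!![(6:ℝ),0;0,1] : Matrix (Fin 2) (Fin 2) ℝ)) ∉ K2) ∧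
    K2 ⊂ lamHull2 := by
  have hK1 : ((![(3:ℝ),1], ![(2:ℝ),1], vecMulVec ![(3:ℝ),1] ![(2:ℝ),1]) ∈ K2) := by
    exact ⟨0, by simp⟩
  have hK2 : ((![(-3:ℝ),1], ![(-2:ℝ),1], vecMulVec ![(-3:ℝ),1] ![(-2:ℝ),1]) ∈ K2) := by
    exact ⟨0, by simp⟩
  have hL : (((![(3:ℝ),1], ![(2:ℝ),1], vecMulVec ![(3:ℝ),1] ![(2:ℝ),1]) :
        MHD2State) - (![(-3:ℝ),1], ![(-2:ℝ),1], vecMulVec ![(-3:ℝ),1] ![(-2:ℝ),1])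
      ∈ Lambda2) := by
    refine ⟨![0,1], ?_, -1, ?_, ?_, ?_, ?_⟩
    · intro h
      have := congrFun h 1
      simp at this
    · funext i; fin_cases i <;>
        simp [mulVec, dotProduct, vecMulVec, Fin.sum_univ_two, vecHead, vecTail] <;> ring
    · funext i; fin_cases i <;>
        simp [mulVec, dotProduct, vecMulVec, Fin.sum_univ_two, transpose,
          vecHead, vecTail] <;> ring
    · simp [dotProduct, Fin.sum_univ_two]
    · simp [dotProduct, Fin.sum_univ_two]
  have hMid : ((1/2 : ℝ) • ((![(3:ℝ),1], ![(2:ℝ),1], vecMulVec ![(3:ℝ),1] ![(2:ℝ),1]) : MHD2State)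
      + (1/2 : ℝ) • ((![(-3:ℝ),1], ![(-2:ℝ),1], vecMulVec ![(-3:ℝ),1] ![(-2:ℝ),1]) : MHD2State)
      = (![(0:ℝ),1], ![(0:ℝ),1], !![(6:ℝ),0;0,1])) := by
    refine Prod.ext ?_ (Prod.ext ?_ ?_)
    · funext i; fin_cases i <;> norm_num
    · funext i; fin_cases i <;> norm_num
    · funext i j; fin_cases i <;> fin_cases j <;>
        simp [vecMulVec] <;> norm_num
  have hNot : ((![(0:ℝ),1], ![(0:ℝ),1], (!![(6:ℝ),0;0,1] : Matrix (Fin 2) (Fin 2) ℝ)) ∉ K2) := by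
    rintro ⟨Pi0, h⟩
    have h00 := congrFun (congrFun h 0) 0
    have h11 := congrFun (congrFun h 1) 1
    simp [vecMulVec, Matrix.one_apply] at h00 h11
    rw [h11] at h00
    norm_num at h00
  refine ⟨hK1, hK2, hL, hMid, hNot, ?_, ?_⟩
  · intro p hp
    exact Set.mem_iUnion.mpr ⟨0, hp⟩
  · intro hsub
    apply hNot
    apply hsub
    apply Set.mem_iUnion.mpr ⟨1, ?_⟩
    refine Or.inr ⟨1/2, ⟨by norm_num, by norm_num⟩,
      _, hK1, _, hK2, hL, ?_⟩
    rw [← hMid]; norm_num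
end
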